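/- Let [p₁, p₂] = F_n ∩ F_{n'} be an edge between two faces of a Newton diagram, q₁, q₂ ∈ ∂F_n ∩ ℤ³ such that [p₁,q₁], [p₂,q₂] are the primitive boundary segments of F_n adjacent to [p₁,p₂], and set α₁ = ℓ_{n'}(q₁ - p₁), α₂ = ℓ_{n'}(q₂ - p₂). If p₁ is a regular vertex of F_n, then α_{n,n'} = α₁ and α₁ divides α₂, where α_{n,n'} is the determinant of the pair of support functions ℓ_n, ℓ_{n'}. -/
import Mathlib


/-- Let `[p₁,p₂] = F_n ∩ F_{n'}` be an edge between two faces of a Newton diagram, lying in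
the affine plane `H = {ℓ_n = m}`, and let `q₁, q₂ ∈ ∂F_n ∩ ℤ³` be such that `[p₁,q₁]` and
`[p₂,q₂]` are the primitive boundary segments of `F_n` adjacent to `[p₁,p₂]`.  Set
`α₁ = ℓ_{n'}(q₁-p₁)` and `α₂ = ℓ_{n'}(q₂-p₂)`.  If `p₁` is a regular vertex of `F_n` — i.e.
`p₂-p₁` and `q₁-p₁` form an affine `ℤ`-basis of `H ∩ ℤ³` — then `α₁` equals the content
`α_{n,n'}` of the affine function `ℓ_{n'}|_H` (the gcd of its differences on `H ∩ ℤ³`) and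
`α₁` divides `α₂`. -/
theorem stmt12 (ℓn ℓn' : (Fin 3 → ℤ) →ₗ[ℤ] ℤ) (m : ℤ)
    (p₁ p₂ q₁ q₂ : Fin 3 → ℤ)
    (hp₁ : ℓn p₁ = m) (hp₂ : ℓn p₂ = m) (hq₁ : ℓn q₁ = m) (hq₂ : ℓn q₂ = m)
    (hedge : ℓn' p₁ = ℓn' p₂)
    (hreg : ∀ x : Fin 3 → ℤ, ℓn x = m →
      ∃ a b : ℤ, x = p₁ + a • (p₂ - p₁) + b • (q₁ - p₁))
    (α₁ α₂ : ℤ)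
    (hα₁ : α₁ = ℓn' (q₁ - p₁)) (hα₂ : α₂ = ℓn' (q₂ - p₂))
    (hα₁pos : 0 < α₁) :
    (∀ x : Fin 3 → ℤ, ℓn x = m → α₁ ∣ (ℓn' x - ℓn' p₁)) ∧
    (∀ c : ℤ, (∀ x : Fin 3 → ℤ, ℓn x = m → c ∣ (ℓn' x - ℓn' p₁)) → c ∣ α₁) ∧
    α₁ ∣ α₂ := by
  have key : ∀ x : Fin 3 → ℤ, ℓn x = m → α₁ ∣ (ℓn' x - ℓn' p₁) := by
    intro x hx
    obtain ⟨a, b, hab⟩ := hreg x hx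
    refine ⟨b, ?_⟩
    subst hab hα₁
    simp only [map_add, map_smul, map_sub, smul_eq_mul, hedge]
    ring
  refine ⟨key, fun c hc => ?_, ?_⟩
  · have := hc q₁ hq₁
    rw [hα₁, map_sub]
    exact this
  · have h2 := key q₂ hq₂
    have h0 : ℓn' p₂ - ℓn' p₁ = 0 := by rw [hedge]; ring
    have : α₂ = (ℓn' q₂ - ℓn' p₁) - (ℓn' p₂ - ℓn' p₁) := by
      rw [hα₂, map_sub]; ring
    rw [this, h0, sub_zero]
    exact h2
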